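/- Under the Benjamini–Hochberg procedure applied to m independent p-values, each uniform on [0,1] under the null, with m₀ true nulls, the FDR is exactly α·m₀/m (for the continuous uniform case); in particular FDR ≤ α. -/

import Mathlib

/-- The i-th smallest of the values `p 1, ..., p m` (1-indexed). -/
noncomputable def sortedVal {m : ℕ} (p : Fin m → ℝ) (i : ℕ) : ℝ :=
  (Multiset.sort (Multiset.ofList (List.ofFn p)) (· ≤ ·)).getD (i - 1) 0

open Classical in
/-- The Benjamini–Hochberg cutoff index `k(α) = max{i : p_(i) ≤ iα/m}`. -/
noncomputable def bhIndex {m : ℕ} (p : Fin m → ℝ) (α : ℝ) : ℕ :=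
  ((Finset.Icc 1 m).filter (fun i => sortedVal p i ≤ i * α / m)).sup id

open Classical in
/-- The BH rejection set at level α, `{j : p_j ≤ k(α)·α/m}`. -/
noncomputable def bhReject {m : ℕ} (p : Fin m → ℝ) (α : ℝ) : Finset (Fin m) :=
  Finset.univ.filter (fun j => p j ≤ (bhIndex p α : ℝ) * α / m)

open Classical

/-- number of p-values ≤ t -/
noncomputable def Nle {m : ℕ} (p : Fin m → ℝ) (t : ℝ) : ℕ :=
  (Finset.univ.filter (fun j => p j ≤ t)).card

lemma sorted_getD_le_iff {L : List ℝ} (hL : L.Pairwise (· ≤ ·)) {i : ℕ}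
    (h1 : 1 ≤ i) (h2 : i ≤ L.length) (t : ℝ) :
    L.getD (i - 1) 0 ≤ t ↔ i ≤ L.countP (fun x => decide (x ≤ t)) := by
  have hi : i - 1 < L.length := by omega
  rw [List.getD_eq_getElem L 0 hi]
  have hpw := List.pairwise_iff_getElem.mp hL
  constructor
  · intro h
    have hsplit : L.countP (fun x => decide (x ≤ t)) =
        (L.take i).countP (fun x => decide (x ≤ t)) +
        (L.drop i).countP (fun x => decide (x ≤ t)) := by
      conv_lhs => rw [← List.take_append_drop i L]
      rw [List.countP_append]
    have htake : (L.take i).countP (fun x => decide (x ≤ t)) = i := by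
      have hall : ∀ a ∈ L.take i, (fun x => decide (x ≤ t)) a = true := by
        intro a ha
        obtain ⟨j, hj, rfl⟩ := List.mem_iff_getElem.mp ha
        have hjlen : j < L.length := by
          have := hj; rw [List.length_take] at this; omega
        rw [List.getElem_take]
        have hji : j ≤ i - 1 := by
          have := hj; rw [List.length_take] at this; omega
        have : L[j] ≤ L[i-1] := by
          rcases Nat.lt_or_ge j (i-1) with hlt | hge
          · exact hpw j (i-1) hjlen hi hlt
          · have : j = i - 1 := by omega
            subst this; exact le_rfl
        simpa using this.trans h
      rw [List.countP_eq_length.mpr hall, List.length_take]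
      omega
    omega
  · intro h
    by_contra hgt
    push_neg at hgt
    have hsplit : L.countP (fun x => decide (x ≤ t)) =
        (L.take (i-1)).countP (fun x => decide (x ≤ t)) +
        (L.drop (i-1)).countP (fun x => decide (x ≤ t)) := by
      conv_lhs => rw [← List.take_append_drop (i-1) L]
      rw [List.countP_append]
    have hdrop : (L.drop (i-1)).countP (fun x => decide (x ≤ t)) = 0 := by
      rw [List.countP_eq_zero]
      intro a ha
      obtain ⟨j, hj, rfl⟩ := List.mem_iff_getElem.mp ha
      rw [List.getElem_drop]
      have hlen : i - 1 + j < L.length := by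
        have := hj; rw [List.length_drop] at this; omega
      have : L[i-1] ≤ L[i-1+j] := by
        rcases Nat.eq_zero_or_pos j with rfl | hj0
        · simp
        · exact hpw (i-1) (i-1+j) hi hlen (by omega)
      simp only [decide_eq_true_eq]
      intro hc
      exact absurd (this.trans hc) (not_le.mpr hgt)
    have htle : (L.take (i-1)).countP (fun x => decide (x ≤ t)) ≤ i - 1 :=
      (List.countP_le_length).trans (by rw [List.length_take]; omega)
    omega

lemma sortedVal_le_iff {m : ℕ} (p : Fin m → ℝ) {i : ℕ} (h1 : 1 ≤ i) (h2 : i ≤ m) (t : ℝ) :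
    sortedVal p i ≤ t ↔ i ≤ Nle p t := by
  set L := Multiset.sort (Multiset.ofList (List.ofFn p)) (· ≤ ·) with hLdef
  have hs : L.Pairwise (· ≤ ·) := Multiset.pairwise_sort _ _
  have hlen : L.length = m := by
    rw [hLdef, Multiset.length_sort]; simp
  have hc : L.countP (fun x => decide (x ≤ t)) = Nle p t := by
    have hmul : (L : Multiset ℝ) = Multiset.ofList (List.ofFn p) := Multiset.sort_eq _ _
    have h1' : L.countP (fun x => decide (x ≤ t))
        = Multiset.countP (fun x => x ≤ t) (L : Multiset ℝ) := by
      rw [Multiset.coe_countP]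
    rw [h1', hmul]
    have : (Multiset.ofList (List.ofFn p)) = Multiset.map p Finset.univ.val := by
      rw [Fin.univ_val_map]
    rw [this, Multiset.countP_map]
    unfold Nle
    rfl
  have := sorted_getD_le_iff hs h1 (hlen ▸ h2) t
  rw [hc] at this
  exact this

lemma Nle_le {m : ℕ} (p : Fin m → ℝ) (t : ℝ) : Nle p t ≤ m := by
  unfold Nle
  exact (Finset.card_filter_le _ _).trans (by simp)

lemma Nle_mono {m : ℕ} (p : Fin m → ℝ) {t₁ t₂ : ℝ} (h : t₁ ≤ t₂) : Nle p t₁ ≤ Nle p t₂ := by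
  apply Finset.card_le_card
  intro j hj
  simp only [Finset.mem_filter, Finset.mem_univ, true_and] at *
  exact hj.trans h

lemma Nle_le_Nle {m : ℕ} {p q : Fin m → ℝ} {t : ℝ} (h : ∀ j, p j ≤ t → q j ≤ t) :
    Nle p t ≤ Nle q t := by
  apply Finset.card_le_card
  intro j hj
  simp only [Finset.mem_filter, Finset.mem_univ, true_and] at *
  exact h j hj

lemma le_bhIndex {m : ℕ} {p : Fin m → ℝ} {α : ℝ} {i : ℕ} (h1 : 1 ≤ i) (h2 : i ≤ m)
    (h : sortedVal p i ≤ i * α / m) : i ≤ bhIndex p α := by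
  have : i ∈ (Finset.Icc 1 m).filter (fun i => sortedVal p i ≤ i * α / m) := by
    simp only [Finset.mem_filter, Finset.mem_Icc]
    exact ⟨⟨h1, h2⟩, h⟩
  exact Finset.le_sup (f := id) this

lemma bhIndex_le {m : ℕ} (p : Fin m → ℝ) (α : ℝ) : bhIndex p α ≤ m := by
  apply Finset.sup_le
  intro i hi
  simp only [Finset.mem_filter, Finset.mem_Icc] at hi
  exact hi.1.2

lemma bhIndex_mem {m : ℕ} (p : Fin m → ℝ) (α : ℝ) (hpos : 1 ≤ bhIndex p α) :
    1 ≤ bhIndex p α ∧ bhIndex p α ≤ m ∧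
      sortedVal p (bhIndex p α) ≤ (bhIndex p α) * α / m := by
  have hne : ((Finset.Icc 1 m).filter (fun i => sortedVal p i ≤ i * α / m)).Nonempty := by
    by_contra h
    rw [Finset.not_nonempty_iff_eq_empty] at h
    unfold bhIndex at hpos
    rw [h] at hpos
    simp at hpos
  obtain ⟨b, hb, hsup⟩ := Finset.exists_mem_eq_sup _ hne id
  have hbb : bhIndex p α = b := hsup
  simp only [Finset.mem_filter, Finset.mem_Icc] at hb
  rw [hbb]
  exact ⟨hb.1.1, hb.1.2, hb.2⟩

lemma nonneg_thresh {m i : ℕ} {α : ℝ} (hα : 0 ≤ α) : (0:ℝ) ≤ i * α / m := by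
  positivity

/-- The number of rejections equals the BH index. -/
lemma card_bhReject {m : ℕ} (p : Fin m → ℝ) (α : ℝ) (hα : 0 ≤ α)
    (hp : ∀ j, 0 ≤ p j) : (bhReject p α).card = bhIndex p α := by
  have hcard : (bhReject p α).card = Nle p ((bhIndex p α) * α / m) := by
    unfold bhReject Nle
    congr 1
  rcases Nat.eq_zero_or_pos (bhIndex p α) with h0 | hpos
  · rw [hcard, h0]
    by_contra hne
    have hNpos : 1 ≤ Nle p ((0:ℕ) * α / m) := by omega
    have hj : ∃ j : Fin m, p j ≤ (0:ℕ) * α / m := by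
      by_contra hno
      push_neg at hno
      have : Nle p ((0:ℕ) * α / m) = 0 := by
        unfold Nle
        rw [Finset.card_eq_zero, Finset.filter_eq_empty_iff]
        intro j _
        exact not_le.mpr (hno j)
      omega
    obtain ⟨j, hjle⟩ := hj
    have hm1 : 1 ≤ m := j.pos
    have hj0 : p j = 0 := le_antisymm (by simpa using hjle) (hp j)
    have hN1 : 1 ≤ Nle p ((1:ℕ) * α / m) := by
      have : j ∈ Finset.univ.filter (fun l => p l ≤ (1:ℕ) * α / m) := by
        simp only [Finset.mem_filter, Finset.mem_univ, true_and]
        rw [hj0]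
        exact nonneg_thresh hα
      have hc := Finset.card_pos.mpr ⟨j, this⟩
      unfold Nle
      exact hc
    have h1S : 1 ≤ bhIndex p α :=
      le_bhIndex le_rfl hm1 ((sortedVal_le_iff p le_rfl hm1 _).mpr hN1)
    omega
  · obtain ⟨h1, h2, h3⟩ := bhIndex_mem p α hpos
    set k := bhIndex p α with hk
    have hge : k ≤ Nle p (k * α / m) := (sortedVal_le_iff p h1 h2 _).mp h3
    have hle : Nle p (k * α / m) ≤ k := by
      by_contra hgt
      push_neg at hgt
      have hk1m : k + 1 ≤ m := le_trans hgt (Nle_le p _)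
      have hmpos : (0:ℝ) < m := by
        have : 0 < m := by omega
        exact_mod_cast this
      have : sortedVal p (k+1) ≤ ((k+1 : ℕ) : ℝ) * α / m := by
        rw [sortedVal_le_iff p (by omega) hk1m]
        refine le_trans hgt (Nle_mono p ?_)
        apply div_le_div_of_nonneg_right ?_ hmpos.le
        push_cast
        nlinarith
      have := le_bhIndex (p := p) (α := α) (by omega) hk1m this
      omega
    rw [hcard]; omega

lemma bhIndex_le_update {m : ℕ} (p : Fin m → ℝ) (α : ℝ) (hα : 0 ≤ α) (j : Fin m) :
    bhIndex p α ≤ bhIndex (Function.update p j 0) α := by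
  apply Finset.sup_le
  intro i hi
  simp only [Finset.mem_filter, Finset.mem_Icc] at hi
  obtain ⟨⟨h1, h2⟩, h3⟩ := hi
  refine le_bhIndex h1 h2 ?_
  simp only [id_eq]
  rw [sortedVal_le_iff _ h1 h2]
  refine le_trans ((sortedVal_le_iff p h1 h2 _).mp h3) (Nle_le_Nle ?_)
  intro l hl
  rcases eq_or_ne l j with rfl | hne
  · rw [Function.update_self]
    exact nonneg_thresh hα
  · rwa [Function.update_of_ne hne]

lemma one_le_bhIndex_update {m : ℕ} (p : Fin m → ℝ) (α : ℝ) (hα : 0 ≤ α) (j : Fin m) :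
    1 ≤ bhIndex (Function.update p j 0) α := by
  have hm1 : 1 ≤ m := j.pos
  refine le_bhIndex le_rfl hm1 ?_
  rw [sortedVal_le_iff _ le_rfl hm1]
  have hjmem : j ∈ Finset.univ.filter (fun l => Function.update p j 0 l ≤ ((1:ℕ):ℝ) * α / m) := by
    simp only [Finset.mem_filter, Finset.mem_univ, true_and, Function.update_self]
    exact nonneg_thresh hα
  have := Finset.card_pos.mpr ⟨j, hjmem⟩
  unfold Nle
  exact this

lemma bhIndex_eq_update {m : ℕ} (p : Fin m → ℝ) (α : ℝ) (hα : 0 ≤ α) (j : Fin m)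
    (h : p j ≤ (bhIndex (Function.update p j 0) α : ℝ) * α / m) :
    bhIndex p α = bhIndex (Function.update p j 0) α := by
  refine le_antisymm (bhIndex_le_update p α hα j) ?_
  obtain ⟨h1, h2, h3⟩ := bhIndex_mem _ α (one_le_bhIndex_update p α hα j)
  refine le_bhIndex h1 h2 ?_
  rw [sortedVal_le_iff p h1 h2]
  refine le_trans ((sortedVal_le_iff _ h1 h2 _).mp h3) (Nle_le_Nle ?_)
  intro l hl
  rcases eq_or_ne l j with rfl | hne
  · exact h
  · rwa [Function.update_of_ne hne] at hl

lemma mem_bhReject_iff {m : ℕ} (p : Fin m → ℝ) (α : ℝ) (hα : 0 ≤ α) (j : Fin m) :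
    j ∈ bhReject p α ↔ p j ≤ (bhIndex (Function.update p j 0) α : ℝ) * α / m := by
  unfold bhReject
  simp only [Finset.mem_filter, Finset.mem_univ, true_and]
  constructor
  · intro hj
    refine hj.trans ?_
    have hk := bhIndex_le_update p α hα j
    have hmul : ((bhIndex p α : ℝ)) * α ≤ (bhIndex (Function.update p j 0) α : ℝ) * α :=
      mul_le_mul_of_nonneg_right (by exact_mod_cast hk) hα
    apply div_le_div_of_nonneg_right hmul
    positivity
  · intro hj
    rw [bhIndex_eq_update p α hα j hj]
    exact hj

lemma bhIndex_eq_sup {m : ℕ} (p : Fin m → ℝ) (α : ℝ) :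
    bhIndex p α = (Finset.Icc 1 m).sup (fun i => if sortedVal p i ≤ i * α / m then i else 0) := by
  unfold bhIndex
  apply le_antisymm
  · apply Finset.sup_le
    intro i hi
    simp only [Finset.mem_filter] at hi
    refine le_trans ?_ (Finset.le_sup hi.1)
    simp [hi.2]
  · apply Finset.sup_le
    intro i hi
    split_ifs with h
    · exact Finset.le_sup (f := id) (by simp only [Finset.mem_filter]; exact ⟨hi, h⟩)
    · exact Nat.zero_le _

lemma measurable_finsetSup {Ω' : Type*} [MeasurableSpace Ω'] (s : Finset ℕ)
    (f : ℕ → Ω' → ℕ) (hf : ∀ i, Measurable (f i)) :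
    Measurable (fun x => s.sup (fun i => f i x)) := by
  classical
  induction s using Finset.induction with
  | empty => simpa using measurable_const
  | insert _ _ _ ih =>
    simp only [Finset.sup_insert]
    exact Measurable.sup (hf _) ih

lemma measurable_Nle {Ω' : Type*} [MeasurableSpace Ω'] {m : ℕ} (r : Fin m → Ω' → ℝ)
    (hr : ∀ i, Measurable (r i)) (t : ℝ) :
    Measurable (fun x => Nle (fun l => r l x) t) := by
  have heq : (fun x => Nle (fun l => r l x) t)
      = fun x => ∑ j : Fin m, if r j x ≤ t then 1 else 0 := by
    funext x
    unfold Nle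
    rw [Finset.card_filter]
  rw [heq]
  apply Finset.measurable_sum
  intro j _
  exact Measurable.ite (measurableSet_le (hr j) measurable_const) measurable_const
    measurable_const

lemma measurable_bhIndexFn {Ω' : Type*} [MeasurableSpace Ω'] {m : ℕ} (r : Fin m → Ω' → ℝ)
    (hr : ∀ i, Measurable (r i)) (α : ℝ) :
    Measurable (fun x => bhIndex (fun i => r i x) α) := by
  have key : (fun x => bhIndex (fun i => r i x) α)
      = fun x => (Finset.Icc 1 m).sup
          (fun i => if i ≤ Nle (fun l => r l x) (i * α / m) then i else 0) := by
    funext x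
    rw [bhIndex_eq_sup]
    apply Finset.sup_congr rfl
    intro i hi
    simp only [Finset.mem_Icc] at hi
    exact if_congr (sortedVal_le_iff _ hi.1 hi.2 _) rfl rfl
  rw [key]
  apply measurable_finsetSup
  intro i
  exact Measurable.ite (measurable_Nle r hr _ measurableSet_Ici) measurable_const
    measurable_const

open MeasureTheory ProbabilityTheory

lemma null_cdf {Ω : Type*} [MeasurableSpace Ω] (P : Measure Ω)
    (X : Ω → ℝ) (hX : Measurable X)
    (hmap : Measure.map X P = volume.restrict (Set.Icc (0:ℝ) 1))
    {c : ℝ} (hc0 : 0 ≤ c) (hc1 : c ≤ 1) :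
    P {ω | X ω ≤ c} = ENNReal.ofReal c := by
  have h1 : {ω | X ω ≤ c} = X ⁻¹' (Set.Iic c) := rfl
  rw [h1, ← Measure.map_apply hX measurableSet_Iic, hmap,
    Measure.restrict_apply measurableSet_Iic]
  have h2 : Set.Iic c ∩ Set.Icc 0 1 = Set.Icc 0 c := by
    ext x
    simp only [Set.mem_inter_iff, Set.mem_Iic, Set.mem_Icc]
    constructor
    · rintro ⟨ha, hb, _⟩; exact ⟨hb, ha⟩
    · rintro ⟨ha, hb⟩; exact ⟨hb, ha, hb.trans hc1⟩
  rw [h2, Real.volume_Icc]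
  simp

lemma indep_key {Ω : Type*} [MeasurableSpace Ω] (P : Measure Ω) [IsProbabilityMeasure P]
    {m : ℕ} (p : Fin m → Ω → ℝ) (hmeas : ∀ j, Measurable (p j))
    (hindep : iIndepFun p P) (α : ℝ) (j : Fin m) (c : ℝ) (k : ℕ) :
    P ({ω | p j ω ≤ c} ∩ {ω | bhIndex (Function.update (fun l => p l ω) j 0) α = k})
      = P {ω | p j ω ≤ c} *
        P {ω | bhIndex (Function.update (fun l => p l ω) j 0) α = k} := by
  classical
  set S : Finset (Fin m) := {j} with hS
  set T : Finset (Fin m) := {j}ᶜ with hT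
  have hST : Disjoint S T := by
    simp [hS, hT, disjoint_compl_right]
  have hIF := hindep.indepFun_finset S T hST hmeas
  have hjS : j ∈ S := by simp [hS]
  set sA : Set ((i : S) → ℝ) := {g | g ⟨j, hjS⟩ ≤ c} with hsAdef
  have hsA : MeasurableSet sA := measurableSet_le (measurable_pi_apply _) measurable_const
  set r : Fin m → ((i : T) → ℝ) → ℝ :=
    fun i => if h : i = j then (fun _ => 0)
             else (fun y => y ⟨i, by simp [hT, h]⟩) with hrdef
  have hG : Measurable (fun y : (i : T) → ℝ => bhIndex (fun i => r i y) α) := by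
    apply measurable_bhIndexFn
    intro i
    by_cases h : i = j
    · simp only [hrdef, dif_pos h]
      exact measurable_const
    · simp only [hrdef, dif_neg h]
      exact measurable_pi_apply _
  set sB : Set ((i : T) → ℝ) := (fun y => bhIndex (fun i => r i y) α) ⁻¹' {k} with hsBdef
  have hsB : MeasurableSet sB := hG (measurableSet_singleton k)
  have hres := hIF.measure_inter_preimage_eq_mul sA sB hsA hsB
  have hA : (fun a (i : S) => p i a) ⁻¹' sA = {ω | p j ω ≤ c} := rfl
  have hB : (fun a (i : T) => p i a) ⁻¹' sB
      = {ω | bhIndex (Function.update (fun l => p l ω) j 0) α = k} := by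
    ext ω
    simp only [Set.mem_preimage, Set.mem_setOf_eq, hsBdef, Set.mem_singleton_iff]
    have heq : (fun i => r i (fun l : T => p l ω)) = Function.update (fun l => p l ω) j 0 := by
      funext i
      by_cases h : i = j
      · subst h
        simp [hrdef, Function.update_self]
      · simp [hrdef, h, Function.update_of_ne h]
    rw [heq]
  rw [hA, hB] at hres
  exact hres

lemma aux_integral {Ω : Type*} [MeasurableSpace Ω] (P : Measure Ω) [IsProbabilityMeasure P]
    {m : ℕ} (hm : 1 ≤ m) (p : Fin m → Ω → ℝ) (hmeas : ∀ j, Measurable (p j))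
    (hindep : iIndepFun p P)
    {α : ℝ} (hα0 : 0 ≤ α) (hα1 : α ≤ 1) (j : Fin m)
    (hnull : Measure.map (p j) P = volume.restrict (Set.Icc (0:ℝ) 1)) :
    Integrable (fun ω =>
      if p j ω ≤ (bhIndex (Function.update (fun l => p l ω) j 0) α : ℝ) * α / m
      then ((bhIndex (Function.update (fun l => p l ω) j 0) α : ℝ))⁻¹ else 0) P ∧
    (∫ ω, (if p j ω ≤ (bhIndex (Function.update (fun l => p l ω) j 0) α : ℝ) * α / m
      then ((bhIndex (Function.update (fun l => p l ω) j 0) α : ℝ))⁻¹ else 0) ∂P) = α / m := by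
  classical
  set K : Ω → ℕ := fun ω => bhIndex (Function.update (fun l => p l ω) j 0) α with hK
  have hKmeas : Measurable K := by
    have h := measurable_bhIndexFn (fun i ω => Function.update (fun l => p l ω) j 0 i) ?_ α
    · exact h
    · intro i
      show Measurable (fun ω => Function.update (fun l => p l ω) j 0 i)
      by_cases h : i = j
      · have he : (fun ω => Function.update (fun l => p l ω) j 0 i) = fun _ => (0:ℝ) := by
          funext ω; rw [h, Function.update_self]
        rw [he]; exact measurable_const
      · have he : (fun ω => Function.update (fun l => p l ω) j 0 i) = fun ω => p i ω := by
          funext ω; rw [Function.update_of_ne h]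
        rw [he]; exact hmeas i
  have hK1 : ∀ ω, 1 ≤ K ω := fun ω => one_le_bhIndex_update _ α hα0 j
  have hKm : ∀ ω, K ω ≤ m := fun ω => bhIndex_le _ α
  set E : ℕ → Set Ω := fun k => {ω | K ω = k} with hE
  have hEmeas : ∀ k, MeasurableSet (E k) := fun k => hKmeas (measurableSet_singleton k)
  set A : ℕ → Set Ω := fun k => {ω | p j ω ≤ (k:ℝ) * α / m} with hA
  have hAmeas : ∀ k, MeasurableSet (A k) :=
    fun k => measurableSet_le (hmeas j) measurable_const
  have hpt : (fun ω => if p j ω ≤ (K ω : ℝ) * α / m then ((K ω : ℝ))⁻¹ else 0)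
      = fun ω => ∑ k ∈ Finset.Icc 1 m,
          Set.indicator (E k ∩ A k) (fun _ => ((k:ℕ):ℝ)⁻¹) ω := by
    funext ω
    rw [Finset.sum_eq_single (K ω)]
    · simp only [Set.indicator_apply, Set.mem_inter_iff, Set.mem_setOf_eq, hE, hA]
      by_cases h : p j ω ≤ (K ω:ℝ)*α/m <;> simp [h]
    · intro b _ hb
      apply Set.indicator_of_notMem
      rintro ⟨h1, -⟩
      exact hb h1.symm
    · intro hnot
      exact absurd (Finset.mem_Icc.mpr ⟨hK1 ω, hKm ω⟩) hnot
  have hint : ∀ k ∈ Finset.Icc 1 m,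
      Integrable (fun ω => Set.indicator (E k ∩ A k) (fun _ => ((k:ℕ):ℝ)⁻¹) ω) P := by
    intro k _
    exact (integrable_const _).indicator ((hEmeas k).inter (hAmeas k))
  have hmR : (0:ℝ) < m := by exact_mod_cast hm
  have hPA : ∀ k ∈ Finset.Icc 1 m, P (A k) = ENNReal.ofReal ((k:ℝ) * α / m) := by
    intro k hk
    simp only [Finset.mem_Icc] at hk
    have hc0 : (0:ℝ) ≤ (k:ℝ) * α / m := by positivity
    have hc1 : (k:ℝ) * α / m ≤ 1 := by
      have hkm : (k:ℝ) ≤ m := by exact_mod_cast hk.2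
      have h1 : (k:ℝ) * α / m ≤ (m:ℝ) * α / m :=
        div_le_div_of_nonneg_right (mul_le_mul_of_nonneg_right hkm hα0) hmR.le
      have h2 : (m:ℝ) * α / m = α := by
        field_simp
      linarith
    exact null_cdf P (p j) (hmeas j) hnull hc0 hc1
  have hterm : ∀ k ∈ Finset.Icc 1 m,
      (∫ ω, Set.indicator (E k ∩ A k) (fun _ => ((k:ℕ):ℝ)⁻¹) ω ∂P)
        = α / m * (P (E k)).toReal := by
    intro k hk
    simp only [Finset.mem_Icc] at hk
    rw [MeasureTheory.integral_indicator_const _ ((hEmeas k).inter (hAmeas k))]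
    have hinter : E k ∩ A k = A k ∩ E k := Set.inter_comm _ _
    have hPEA : P (E k ∩ A k) = ENNReal.ofReal ((k:ℝ) * α / m) * P (E k) := by
      rw [hinter]
      have := indep_key P p hmeas hindep α j ((k:ℝ) * α / m) k
      rw [this, hPA k (Finset.mem_Icc.mpr hk)]
    rw [measureReal_def, hPEA, ENNReal.toReal_mul, ENNReal.toReal_ofReal (by positivity)]
    have hk0 : ((k:ℕ):ℝ) ≠ 0 := by
      have : 1 ≤ k := hk.1
      positivity
    rw [smul_eq_mul]
    field_simp
  have hsum : ∑ k ∈ Finset.Icc 1 m, (P (E k)).toReal = 1 := by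
    have hdisj : (↑(Finset.Icc 1 m) : Set ℕ).PairwiseDisjoint E := by
      intro a _ b _ hab
      simp only [Function.onFun]
      rw [Set.disjoint_left]
      intro ω hωa hωb
      exact hab (hωa.symm.trans hωb)
    have hcup : P (⋃ k ∈ Finset.Icc 1 m, E k) = ∑ k ∈ Finset.Icc 1 m, P (E k) :=
      measure_biUnion_finset hdisj (fun k _ => hEmeas k)
    have huniv : (⋃ k ∈ Finset.Icc 1 m, E k) = Set.univ := by
      ext ω
      simp only [Set.mem_iUnion, Set.mem_univ, iff_true, hE, Set.mem_setOf_eq]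
      exact ⟨K ω, Finset.mem_Icc.mpr ⟨hK1 ω, hKm ω⟩, rfl⟩
    rw [huniv, measure_univ] at hcup
    rw [← ENNReal.toReal_sum (fun k _ => measure_ne_top P (E k)), ← hcup]
    simp
  constructor
  · rw [show (fun ω =>
      if p j ω ≤ (bhIndex (Function.update (fun l => p l ω) j 0) α : ℝ) * α / m
      then ((bhIndex (Function.update (fun l => p l ω) j 0) α : ℝ))⁻¹ else 0)
      = (fun ω => if p j ω ≤ (K ω : ℝ) * α / m then ((K ω : ℝ))⁻¹ else 0) from rfl, hpt]
    exact integrable_finset_sum _ hint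
  · rw [show (fun ω =>
      if p j ω ≤ (bhIndex (Function.update (fun l => p l ω) j 0) α : ℝ) * α / m
      then ((bhIndex (Function.update (fun l => p l ω) j 0) α : ℝ))⁻¹ else 0)
      = (fun ω => if p j ω ≤ (K ω : ℝ) * α / m then ((K ω : ℝ))⁻¹ else 0) from rfl, hpt]
    rw [MeasureTheory.integral_finset_sum _ hint]
    rw [Finset.sum_congr rfl hterm, ← Finset.mul_sum, hsum, mul_one]

open MeasureTheory ProbabilityTheory Classical in
/-- For m independent p-values with the `m₀` true nulls uniform on [0,1], the
Benjamini–Hochberg procedure at level α has FDR exactly `α·m₀/m`; in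
particular the FDR is at most α. -/
theorem bh_FDR_eq {Ω : Type*} [MeasurableSpace Ω]
    (P : Measure Ω) [IsProbabilityMeasure P] {m : ℕ}
    (p : Fin m → Ω → ℝ) (hmeas : ∀ j, Measurable (p j))
    (hindep : iIndepFun p P)
    (H₀ : Finset (Fin m)) (m₀ : ℕ) (hm₀ : H₀.card = m₀)
    (hnull : ∀ j ∈ H₀, Measure.map (p j) P = volume.restrict (Set.Icc (0:ℝ) 1))
    (hrange : ∀ j ω, p j ω ∈ Set.Icc (0 : ℝ) 1)
    (α : ℝ) (hα : α ∈ Set.Icc (0 : ℝ) 1) :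
    (∫ ω, ((bhReject (fun j => p j ω) α ∩ H₀).card : ℝ) /
        max ((bhReject (fun j => p j ω) α).card : ℝ) 1 ∂P) = α * m₀ / m ∧
      (∫ ω, ((bhReject (fun j => p j ω) α ∩ H₀).card : ℝ) /
        max ((bhReject (fun j => p j ω) α).card : ℝ) 1 ∂P) ≤ α := by
    classical
  obtain ⟨hα0, hα1⟩ := hα
  rcases Nat.eq_zero_or_pos m with hm0 | hm
  · subst hm0
    have hH : H₀ = ∅ := Finset.eq_empty_of_forall_notMem (fun j _ => j.elim0)
    have hm₀0 : m₀ = 0 := by rw [← hm₀, hH, Finset.card_empty]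
    subst hm₀0
    constructor <;> simp [hH, Finset.inter_empty, hα0]
  · have hmR : (0:ℝ) < m := by exact_mod_cast hm
    set g : Fin m → Ω → ℝ := fun j ω =>
      if p j ω ≤ (bhIndex (Function.update (fun l => p l ω) j 0) α : ℝ) * α / m
      then ((bhIndex (Function.update (fun l => p l ω) j 0) α : ℝ))⁻¹ else 0 with hg
    have hpt : (fun ω => ((bhReject (fun j => p j ω) α ∩ H₀).card : ℝ) /
        max ((bhReject (fun j => p j ω) α).card : ℝ) 1) = fun ω => ∑ j ∈ H₀, g j ω := by
      funext ω
      have hq0 : ∀ l, 0 ≤ p l ω := fun l => (hrange l ω).1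
      set q : Fin m → ℝ := fun l => p l ω with hq
      set R := bhReject q α with hR
      have hcardsum : ((R ∩ H₀).card : ℝ) = ∑ j ∈ H₀, (if j ∈ R then (1:ℝ) else 0) := by
        have h1 : R ∩ H₀ = H₀.filter (fun j => j ∈ R) := by
          ext x; simp [Finset.mem_inter, Finset.mem_filter, and_comm]
        rw [h1, Finset.card_filter]
        push_cast
        rfl
      show ((R ∩ H₀).card : ℝ) / max ((R.card : ℝ)) 1 = _
      rw [hcardsum, Finset.sum_div]
      apply Finset.sum_congr rfl
      intro j hj
      by_cases hmem : j ∈ R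
      · have hcond := (mem_bhReject_iff q α hα0 j).mp hmem
        have hKeq : bhIndex q α = bhIndex (Function.update q j 0) α :=
          bhIndex_eq_update q α hα0 j hcond
        have hcard : R.card = bhIndex q α := card_bhReject q α hα0 hq0
        have hK1 : 1 ≤ bhIndex (Function.update q j 0) α := one_le_bhIndex_update q α hα0 j
        have hDval : max ((R.card : ℝ)) 1 = (bhIndex (Function.update q j 0) α : ℝ) := by
          rw [hcard, hKeq, max_eq_left]
          exact_mod_cast hK1
        rw [if_pos hmem, hDval]
        show _ = g j ω
        rw [hg]
        simp only []
        rw [if_pos hcond, one_div]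
      · rw [if_neg hmem, zero_div]
        show _ = g j ω
        rw [hg]
        simp only []
        rw [if_neg (fun hc => hmem ((mem_bhReject_iff q α hα0 j).mpr hc))]
    have hInt := fun j (hj : j ∈ H₀) =>
      aux_integral P hm p hmeas hindep hα0 hα1 j (hnull j hj)
    have hI : (∫ ω, ((bhReject (fun j => p j ω) α ∩ H₀).card : ℝ) /
        max ((bhReject (fun j => p j ω) α).card : ℝ) 1 ∂P) = α * m₀ / m := by
      rw [show (fun ω => ((bhReject (fun j => p j ω) α ∩ H₀).card : ℝ) /
        max ((bhReject (fun j => p j ω) α).card : ℝ) 1) = fun ω => ∑ j ∈ H₀, g j ω from hpt]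
      rw [MeasureTheory.integral_finset_sum _ (fun j hj => (hInt j hj).1)]
      rw [Finset.sum_congr rfl (fun j hj => (hInt j hj).2)]
      rw [Finset.sum_const, hm₀, nsmul_eq_mul]
      ring
    refine ⟨hI, ?_⟩
    rw [hI]
    have hm₀m : (m₀:ℝ) ≤ m := by
      have : H₀.card ≤ m := by
        have := Finset.card_le_card (Finset.subset_univ H₀)
        simpa using this
      exact_mod_cast hm₀ ▸ this
    rw [div_le_iff₀ hmR]
    calc α * m₀ ≤ α * m := mul_le_mul_of_nonneg_left hm₀m hα0
    _ = α * m := rfl
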